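/- Every nontrivial idempotent semifield S that is generated as a kernel by a single element has a generator a with a > 1. More generally, if S is generated as a kernel by finitely many elements a₁,…,aₙ, then S is a principal kernel, generated by the single element |a₁| + ⋯ + |aₙ|. -/

import Mathlib

/-- An idempotent semifield structure on a multiplicative abelian group `S`:
a commutative, associative, idempotent addition over which multiplication
distributes. The induced order is `a ≤ b ↔ a + b = b`. -/
structure IdemSemifieldStr (S : Type*) [CommGroup S] where
  add : S → S → S
  add_comm : ∀ a b, add a b = add b a
  add_assoc : ∀ a b c, add (add a b) c = add a (add b c)
  add_idem : ∀ a, add a a = a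
  mul_dist : ∀ g a b, g * add a b = add (g * a) (g * b)

namespace IdemSemifieldStr

variable {S : Type*} [CommGroup S] (A : IdemSemifieldStr S)

/-- The lattice order: `a ≤ b` iff `a + b = b`. -/
def le (a b : S) : Prop := A.add a b = b

/-- The norm `|a| = a + a⁻¹`. -/
def abs (a : S) : S := A.add a a⁻¹

/-- A kernel: a convex multiplicative subgroup. -/
def IsKernel (K : Set S) : Prop :=
  (1 : S) ∈ K ∧ (∀ a ∈ K, ∀ b ∈ K, a * b ∈ K) ∧ (∀ a ∈ K, a⁻¹ ∈ K) ∧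
  (∀ a ∈ K, ∀ b ∈ K, ∀ α β : S, A.add α β = 1 → A.add (α * a) (β * b) ∈ K)

/-- The kernel generated by a set: the intersection of all kernels containing it. -/
def kgen (T : Set S) : Set S := ⋂₀ {K : Set S | A.IsKernel K ∧ T ⊆ K}

end IdemSemifieldStr

namespace IdemSemifieldStrAux

variable {S : Type*} [CommGroup S] (A : IdemSemifieldStr S)

theorem le_add_left (a b : S) : A.le a (A.add a b) := by
  unfold IdemSemifieldStr.le
  rw [← A.add_assoc, A.add_idem]

theorem le_add_right (a b : S) : A.le b (A.add a b) := by
  rw [A.add_comm]; exact le_add_left A b a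

theorem le_trans' {a b c : S} (h1 : A.le a b) (h2 : A.le b c) : A.le a c := by
  unfold IdemSemifieldStr.le at *
  rw [← h2, ← A.add_assoc, h1]

theorem le_antisymm' {a b : S} (h1 : A.le a b) (h2 : A.le b a) : a = b := by
  unfold IdemSemifieldStr.le at *
  rw [← h1, A.add_comm, h2]

theorem mul_le {a b : S} (c : S) (h : A.le a b) : A.le (c * a) (c * b) := by
  unfold IdemSemifieldStr.le at *
  rw [← A.mul_dist, h]

/-- `1 ≤ |a|`. -/
theorem one_le_abs (a : S) : A.le 1 (A.abs a) := by
  set e := A.abs a with he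
  have hsq : A.le 1 (e * e) := by
    have hee : e * e = A.add (A.add (a * a) 1) (A.add 1 (a⁻¹ * a⁻¹)) := by
      rw [he]
      show (A.add a a⁻¹) * A.add a a⁻¹ = _
      rw [A.mul_dist, mul_comm _ a, mul_comm _ a⁻¹, A.mul_dist, A.mul_dist,
        mul_inv_cancel, inv_mul_cancel]
    rw [hee]
    exact le_trans' A (le_add_right A (a * a) 1) (le_add_left A _ _)
  have hsq' : A.add 1 (e * e) = e * e := hsq
  have key : (A.add e 1) * (A.add e 1) = e * (A.add e 1) := by
    have h1 : (A.add e 1) * (A.add e 1)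
        = A.add (A.add (e * e) (e * 1)) (A.add (1 * e) (1 * 1)) := by
      rw [A.mul_dist]; congr 1
      · rw [mul_comm, A.mul_dist]
      · rw [mul_comm, A.mul_dist]
    rw [h1, A.mul_dist]
    simp only [mul_one, one_mul]
    rw [A.add_assoc, ← A.add_assoc e e 1, A.add_idem, A.add_comm e 1,
      ← A.add_assoc, A.add_comm (e * e) 1, hsq']
  have hfe : A.add e 1 = e := mul_right_cancel key
  show A.add 1 e = e
  rw [A.add_comm, hfe]

theorem le_abs (a : S) : A.le a (A.abs a) := le_add_left A a a⁻¹

theorem subset_kgen (T : Set S) : T ⊆ A.kgen T :=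
  fun _ hx => Set.mem_sInter.2 fun _ hK => hK.2 hx

theorem kgen_subset {T K : Set S} (hK : A.IsKernel K) (hT : T ⊆ K) :
    A.kgen T ⊆ K := fun _ hx => Set.mem_sInter.1 hx K ⟨hK, hT⟩

theorem isKernel_kgen (T : Set S) : A.IsKernel (A.kgen T) := by
  refine ⟨?_, ?_, ?_, ?_⟩
  · exact Set.mem_sInter.2 fun K hK => hK.1.1
  · exact fun a ha b hb => Set.mem_sInter.2 fun K hK =>
      hK.1.2.1 a (Set.mem_sInter.1 ha K hK) b (Set.mem_sInter.1 hb K hK)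
  · exact fun a ha => Set.mem_sInter.2 fun K hK =>
      hK.1.2.2.1 a (Set.mem_sInter.1 ha K hK)
  · exact fun a ha b hb α β hαβ => Set.mem_sInter.2 fun K hK =>
      hK.1.2.2.2 a (Set.mem_sInter.1 ha K hK) b (Set.mem_sInter.1 hb K hK) α β hαβ

theorem add_mem {K : Set S} (hK : A.IsKernel K) {a b : S}
    (ha : a ∈ K) (hb : b ∈ K) : A.add a b ∈ K := by
  have := hK.2.2.2 a ha b hb 1 1 (A.add_idem 1)
  simpa using this

theorem abs_mem {K : Set S} (hK : A.IsKernel K) {a : S} (ha : a ∈ K) :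
    A.abs a ∈ K := add_mem A hK ha (hK.2.2.1 a ha)

theorem mem_of_abs_mem {K : Set S} (hK : A.IsKernel K) {a : S}
    (ha : A.abs a ∈ K) : a ∈ K := by
  set e := A.abs a with he
  have hae : A.add a e = e := by
    show A.add a (A.add a a⁻¹) = A.add a a⁻¹
    rw [← A.add_assoc, A.add_idem]
  have h1 : A.add (a * e⁻¹) 1 = 1 := by
    have : A.add (a * e⁻¹) 1 = e⁻¹ * A.add a e := by
      rw [A.mul_dist, mul_comm a e⁻¹, inv_mul_cancel]
    rw [this, hae, inv_mul_cancel]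
  have h2 : A.add (a * e⁻¹ * e) (1 * e⁻¹) = a := by
    rw [inv_mul_cancel_right, one_mul]
    have hae2 : a * e = A.add (a * a) 1 := by
      show a * A.add a a⁻¹ = _
      rw [A.mul_dist, mul_inv_cancel]
    have h1ae : A.add 1 (a * e) = a * e := by
      rw [hae2, ← A.add_assoc, A.add_comm 1 (a * a), A.add_assoc, A.add_idem]
    have : A.add a e⁻¹ = e⁻¹ * A.add (a * e) 1 := by
      rw [A.mul_dist, mul_one, ← mul_assoc, mul_comm e⁻¹ a, mul_assoc,
        inv_mul_cancel, mul_one]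
    rw [this, A.add_comm (a * e) 1, h1ae, ← mul_assoc, mul_comm e⁻¹ a,
      mul_assoc, inv_mul_cancel, mul_one]
  have := hK.2.2.2 e ha e⁻¹ (hK.2.2.1 e ha) (a * e⁻¹) 1 h1
  rwa [h2] at this

theorem mem_of_le {K : Set S} (hK : A.IsKernel K) {g h : S} (hh : h ∈ K)
    (h1 : A.le 1 g) (h2 : A.le g h) : g ∈ K := by
  have hα : A.add (g * h⁻¹) 1 = 1 := by
    have : A.add (g * h⁻¹) 1 = h⁻¹ * A.add g h := by
      rw [A.mul_dist, mul_comm g h⁻¹, inv_mul_cancel]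
    rw [this, h2, inv_mul_cancel]
  have := hK.2.2.2 h hh 1 hK.1 (g * h⁻¹) 1 hα
  rw [inv_mul_cancel_right, one_mul] at this
  have hg1 : A.add g 1 = g := by rw [A.add_comm]; exact h1
  rwa [hg1] at this

theorem le_foldr_init (b : S) (l : List S) : A.le b (l.foldr A.add b) := by
  induction l with
  | nil => exact A.add_idem b
  | cons c l ih => exact le_trans' A ih (le_add_right A c _)

theorem le_foldr_mem (b : S) {l : List S} {a : S} (ha : a ∈ l) :
    A.le a (l.foldr A.add b) := by
  induction l with
  | nil => cases ha
  | cons c l ih =>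
    rcases List.mem_cons.1 ha with h | h
    · subst h; exact le_add_left A a _
    · exact le_trans' A (ih h) (le_add_right A c _)


end IdemSemifieldStrAux

open IdemSemifieldStrAux in
/-- Every nontrivial principal idempotent semifield has a generator a > 1;
and if S is generated as a kernel by finitely many elements a₀, a₁, …, aₙ
then it is principal, generated by |a₀| + |a₁| + ⋯ + |aₙ|. -/
theorem principal_semifield_generator {S : Type*} [CommGroup S]
    (A : IdemSemifieldStr S) :
    ((∃ u : S, A.kgen {u} = Set.univ) → (∃ s : S, s ≠ 1) →
      ∃ a : S, A.kgen {a} = Set.univ ∧ A.le 1 a ∧ a ≠ 1) ∧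
    (∀ (x : S) (xs : List S),
      A.kgen (insert x {y | y ∈ xs}) = Set.univ →
      A.kgen {(xs.map A.abs).foldr A.add (A.abs x)} = Set.univ) := by
  constructor
  · rintro ⟨u, hu⟩ ⟨s, hs⟩
    refine ⟨A.abs u, ?_, one_le_abs A u, ?_⟩
    · apply Set.eq_univ_of_univ_subset
      rw [← hu]
      exact kgen_subset A (isKernel_kgen A _)
        (Set.singleton_subset_iff.2 (mem_of_abs_mem A (isKernel_kgen A _)
          (subset_kgen A _ rfl)))
    · intro habs
      have hker1 : A.IsKernel ({1} : Set S) := by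
        refine ⟨rfl, ?_, ?_, ?_⟩
        · intro a ha b hb
          simp only [Set.mem_singleton_iff] at *
          rw [ha, hb, mul_one]
        · intro a ha
          simp only [Set.mem_singleton_iff] at *
          rw [ha, inv_one]
        · intro a ha b hb α β hαβ
          simp only [Set.mem_singleton_iff] at *
          rw [ha, hb, mul_one, mul_one, hαβ]
      have hsub : (A.kgen {u} : Set S) ⊆ {1} := by
        apply kgen_subset A hker1
        simp only [Set.singleton_subset_iff, Set.mem_singleton_iff]
        have h1 : A.le u 1 := habs ▸ le_abs A u
        have h2 : A.le u⁻¹ 1 := habs ▸ (le_add_right A u u⁻¹)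
        have h3 : A.le 1 u := by
          have := mul_le A u h2
          rwa [mul_inv_cancel, mul_one] at this
        exact (le_antisymm' A h3 h1).symm
      have := hsub (hu ▸ Set.mem_univ s)
      exact hs this
  · intro x xs hgen
    set E := (xs.map A.abs).foldr A.add (A.abs x) with hE
    apply Set.eq_univ_of_univ_subset
    rw [← hgen]
    apply kgen_subset A (isKernel_kgen A _)
    intro z hz
    have hK := isKernel_kgen A ({E} : Set S)
    have hEmem : E ∈ A.kgen {E} := subset_kgen A _ rfl
    have main : ∀ w : S, A.le (A.abs w) E → w ∈ A.kgen {E} := fun w hw =>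
      mem_of_abs_mem A hK (mem_of_le A hK hEmem (one_le_abs A w) hw)
    rcases Set.mem_insert_iff.1 hz with rfl | hz
    · exact main z (le_foldr_init A (A.abs z) _)
    · exact main z (le_foldr_mem A _ (List.mem_map_of_mem (f := A.abs) hz))
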